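/- arXiv:1702.01373 — 2 statements merged into one kernel-verified Lean document; each statement's English description precedes it below -/
import Mathlib

section
/- For the function u_0(r) = (sin r/r)^{−(d−1)/2} on (0,π), the first-order parametrix coefficient u_1(r) = (u_0(r)/r) ∫_0^r u_0^{-1}(Δu_0) dr̃, where Δf = f'' + (log√g)' f' with g = c·sin^{2(d−1)}r, equals u_0(r)·(d−1)/(4r²)·[3 − d + (d−1)r² + (d−3)·r·cot r]. -/
open Real Set

/-- The zeroth parametrix coefficient `u₀(r) = (sin r/r)^{−(d−1)/2}` on `(0,π)`. -/
noncomputable def u₀ (d : ℕ) (r : ℝ) : ℝ := (Real.sin r / r) ^ (-(((d : ℝ) - 1) / 2))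

/-- The radial Laplacian on `S^d`: `Δf(r) = f''(r) + (d−1)·cot(r)·f'(r)`. -/
noncomputable def radLap (d : ℕ) (f : ℝ → ℝ) (r : ℝ) : ℝ :=
  deriv (deriv f) r + ((d : ℝ) - 1) * (Real.cos r / Real.sin r) * deriv f r

namespace ParametrixAux

noncomputable def ct (s : ℝ) : ℝ := Real.cos s / Real.sin s

lemma hasDerivAt_ct {s : ℝ} (hs : Real.sin s ≠ 0) :
    HasDerivAt ct (-1 - ct s ^ 2) s := by
  have h := (Real.hasDerivAt_cos s).div (Real.hasDerivAt_sin s) hs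
  refine h.congr_deriv ?_
  have hpy := Real.sin_sq_add_cos_sq s
  unfold ct
  field_simp

lemma u0_hasDerivAt (d : ℕ) {r : ℝ} (hr : r ∈ Set.Ioo 0 π) :
    HasDerivAt (u₀ d) (u₀ d r * ((-(((d:ℝ)-1)/2)) * (ct r - 1/r))) r := by
  have hr0 : r ≠ 0 := hr.1.ne'
  have hs : 0 < Real.sin r := Real.sin_pos_of_pos_of_lt_pi hr.1 hr.2
  have hx : 0 < Real.sin r / r := div_pos hs hr.1
  have hdx : HasDerivAt (fun s => Real.sin s / s)
      ((Real.cos r * r - Real.sin r * 1) / r ^ 2) r :=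
    (Real.hasDerivAt_sin r).div (hasDerivAt_id r) hr0
  have h := hdx.rpow_const (p := (-(((d:ℝ)-1)/2))) (Or.inl hx.ne')
  refine h.congr_deriv ?_
  rw [Real.rpow_sub_one hx.ne']
  unfold u₀ ct
  field_simp

lemma u0_pos (d : ℕ) {r : ℝ} (hr : r ∈ Set.Ioo 0 π) : 0 < u₀ d r :=
  Real.rpow_pos_of_pos (div_pos (Real.sin_pos_of_pos_of_lt_pi hr.1 hr.2) hr.1) _

lemma u0_deriv2 (d : ℕ) {r : ℝ} (hr : r ∈ Set.Ioo 0 π) :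
    deriv (deriv (u₀ d)) r =
      u₀ d r * ((-(((d:ℝ)-1)/2)) * (ct r - 1/r)) ^ 2
        + u₀ d r * ((-(((d:ℝ)-1)/2)) * ((-1 - ct r ^ 2) + 1/r^2)) := by
  have hr0 : r ≠ 0 := hr.1.ne'
  have hs : Real.sin r ≠ 0 := (Real.sin_pos_of_pos_of_lt_pi hr.1 hr.2).ne'
  have hEv : deriv (u₀ d) =ᶠ[nhds r]
      (fun s => u₀ d s * ((-(((d:ℝ)-1)/2)) * (ct s - 1/s))) := by
    filter_upwards [isOpen_Ioo.mem_nhds hr] with s hsmem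
    exact (u0_hasDerivAt d hsmem).deriv
  rw [hEv.deriv_eq]
  have hinv : HasDerivAt (fun s : ℝ => 1/s) (-(1/r^2)) r := by
    simpa [one_div] using hasDerivAt_inv hr0
  have hφ : HasDerivAt (fun s => (-(((d:ℝ)-1)/2)) * (ct s - 1/s))
      ((-(((d:ℝ)-1)/2)) * ((-1 - ct r ^ 2) - (-(1/r^2)))) r :=
    (((hasDerivAt_ct hs).sub hinv)).const_mul _
  have := ((u0_hasDerivAt d hr).mul hφ).deriv
  exact this.trans (by ring)

lemma integrand_eq (d : ℕ) {s : ℝ} (hs : s ∈ Set.Ioo 0 π) :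
    (u₀ d s)⁻¹ * radLap d (u₀ d) s
      = (((d:ℝ)-1)/2) + (((d:ℝ)-1)/2) * (1 - ((d:ℝ)-1)/2) * (ct s ^ 2 - 1/s^2) := by
  have hu : u₀ d s ≠ 0 := (u0_pos d hs).ne'
  rw [radLap, u0_deriv2 d hs, (u0_hasDerivAt d hs).deriv]
  rw [show Real.cos s / Real.sin s = ct s from rfl]
  field_simp
  ring

noncomputable def K (s : ℝ) : ℝ := (Real.sin s - s * Real.cos s) / (s * Real.sin s)

lemma K_zero : K 0 = 0 := by simp [K]

lemma K_eq {s : ℝ} (h1 : s ≠ 0) (h2 : Real.sin s ≠ 0) : K s = 1/s - ct s := by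
  unfold K ct; field_simp

lemma K_nonneg {s : ℝ} (hs : 0 ≤ s) (hs' : s ≤ π/2) : 0 ≤ K s := by
  rcases eq_or_lt_of_le hs with h | h
  · simp [← h, K]
  · have hsin : 0 < Real.sin s :=
      Real.sin_pos_of_pos_of_lt_pi h (lt_of_le_of_lt hs' (by linarith [Real.pi_pos]))
    apply div_nonneg _ (le_of_lt (mul_pos h hsin))
    rcases eq_or_lt_of_le hs' with h2 | h2
    · have : Real.cos s = 0 := by rw [h2]; exact Real.cos_pi_div_two
      simp [this, hsin.le]
    · have hc : 0 < Real.cos s := Real.cos_pos_of_mem_Ioo ⟨by linarith, h2⟩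
      have h3 := Real.lt_tan h h2
      rw [Real.tan_eq_sin_div_cos, lt_div_iff₀ hc] at h3
      linarith

lemma K_le {s : ℝ} (hs : 0 ≤ s) (hs' : s ≤ π/2) : K s ≤ s/2 := by
  rcases eq_or_lt_of_le hs with h | h
  · simp [← h, K]
  · have hπ : s < π := lt_of_le_of_lt hs' (by linarith [Real.pi_pos])
    have hsin : 0 < Real.sin s := Real.sin_pos_of_pos_of_lt_pi h hπ
    have hc : 0 ≤ Real.cos s := Real.cos_nonneg_of_mem_Icc ⟨by linarith, hs'⟩
    rw [K, div_le_iff₀ (mul_pos h hsin)]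
    have h1 : Real.sin s ≤ s := Real.sin_le hs
    have h2 : 1 - s^2/2 ≤ Real.cos s := Real.one_sub_sq_div_two_le_cos
    nlinarith [hsin.le]

lemma K_tendsto : Filter.Tendsto K (nhdsWithin 0 (Set.Ici 0)) (nhds 0) := by
  have hev : ∀ᶠ s in nhdsWithin (0:ℝ) (Set.Ici 0), 0 ≤ s ∧ s ≤ π/2 := by
    have h1 : ∀ᶠ s in nhdsWithin (0:ℝ) (Set.Ici 0), s ∈ Set.Ici (0:ℝ) :=
      self_mem_nhdsWithin
    have h2 : ∀ᶠ s in nhdsWithin (0:ℝ) (Set.Ici 0), s ≤ π/2 := by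
      apply Filter.Eventually.filter_mono nhdsWithin_le_nhds
      have : (0:ℝ) < π/2 := by linarith [Real.pi_pos]
      filter_upwards [eventually_le_nhds this] with s hs using hs
    filter_upwards [h1, h2] with s h1 h2 using ⟨h1, h2⟩
  have hup : Filter.Tendsto (fun s : ℝ => s/2) (nhdsWithin 0 (Set.Ici 0)) (nhds 0) := by
    have := (continuous_id.div_const (2:ℝ)).tendsto (0:ℝ)
    simpa using this.mono_left nhdsWithin_le_nhds
  refine tendsto_of_tendsto_of_tendsto_of_le_of_le' tendsto_const_nhds hup ?_ ?_
  · filter_upwards [hev] with s hs using K_nonneg hs.1 hs.2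
  · filter_upwards [hev] with s hs using K_le hs.1 hs.2

noncomputable def W (s : ℝ) : ℝ := ct s ^ 2 - 1/s^2

lemma W_bound {x : ℝ} (hx : 0 < x) (hx1 : x ≤ 1) : ‖W x‖ ≤ 8/3 := by
  have hπ : x < π := lt_of_le_of_lt hx1 (by linarith [Real.pi_gt_three])
  have hsin : 0 < Real.sin x := Real.sin_pos_of_pos_of_lt_pi hx hπ
  have hs3 : (3/4) * x ≤ Real.sin x := by
    have h : x - x^3/4 < Real.sin x := by
      have := Real.sin_gt_sub_cube hx; nlinarith [pow_pos hx 3]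
    have hx3 : x^3 ≤ x := by
      nlinarith [mul_nonneg (mul_nonneg hx.le (sub_nonneg.2 hx1)) (by linarith : (0:ℝ) ≤ 1 + x)]
    linarith
  have hW : W x = ((x * Real.cos x - Real.sin x) * (x * Real.cos x + Real.sin x))
      / (x^2 * Real.sin x ^ 2) := by
    unfold W ct; field_simp; ring
  rw [hW, Real.norm_eq_abs, abs_div, abs_mul]
  have hdenpos : 0 < x^2 * Real.sin x ^ 2 := mul_pos (pow_pos hx 2) (pow_pos hsin 2)
  have hden : |x^2 * Real.sin x ^ 2| = x^2 * Real.sin x ^ 2 := abs_of_nonneg hdenpos.le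
  have h1 : |x * Real.cos x - Real.sin x| ≤ (3/4) * x^3 := by
    rw [abs_le]
    have hsl : Real.sin x ≤ x := Real.sin_le hx.le
    have hsg : x - x^3/4 < Real.sin x := by
      have := Real.sin_gt_sub_cube hx; nlinarith [pow_pos hx 3]
    have hcl : Real.cos x ≤ 1 := Real.cos_le_one x
    have hcg : 1 - x^2/2 ≤ Real.cos x := Real.one_sub_sq_div_two_le_cos
    constructor <;> nlinarith
  have h2 : |x * Real.cos x + Real.sin x| ≤ 2 * x := by
    rw [abs_le]
    have hsl : Real.sin x ≤ x := Real.sin_le hx.le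
    have hcl : Real.cos x ≤ 1 := Real.cos_le_one x
    have hcg : -1 ≤ Real.cos x := Real.neg_one_le_cos x
    constructor <;> nlinarith
  rw [hden, div_le_iff₀ hdenpos]
  have hnum : |x * Real.cos x - Real.sin x| * |x * Real.cos x + Real.sin x|
      ≤ (3/4) * x^3 * (2*x) :=
    mul_le_mul h1 h2 (abs_nonneg _) (by nlinarith [pow_pos hx 3])
  have h9 : 9/16 * x^2 ≤ Real.sin x ^ 2 := by nlinarith
  have : (3/4) * x^3 * (2*x) ≤ 8/3 * (x^2 * Real.sin x^2) := by
    nlinarith [mul_le_mul_of_nonneg_left h9 (sq_nonneg x)]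
  linarith

lemma W_intervalIntegrable {r : ℝ} (hr : r ∈ Set.Ioo 0 π) :
    IntervalIntegrable W MeasureTheory.volume 0 r := by
  set m := min r 1 with hm
  have hm0 : 0 < m := lt_min hr.1 one_pos
  have hmr : m ≤ r := min_le_left _ _
  have hm1 : m ≤ 1 := min_le_right _ _
  have hmeas : Measurable W := by
    unfold W ct
    fun_prop
  have hint1 : IntervalIntegrable W MeasureTheory.volume 0 m := by
    rw [intervalIntegrable_iff_integrableOn_Ioc_of_le hm0.le]
    apply MeasureTheory.Measure.integrableOn_of_bounded
      (measure_Ioc_lt_top).ne hmeas.aestronglyMeasurable (M := 8/3)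
    rw [MeasureTheory.ae_restrict_iff' measurableSet_Ioc]
    filter_upwards with x hx
    exact W_bound hx.1 (le_trans hx.2 hm1)
  have hint2 : IntervalIntegrable W MeasureTheory.volume m r := by
    apply ContinuousOn.intervalIntegrable
    rw [Set.uIcc_of_le hmr]
    intro x hx
    have hx0 : (0:ℝ) < x := lt_of_lt_of_le hm0 hx.1
    have hsin : Real.sin x ≠ 0 :=
      (Real.sin_pos_of_pos_of_lt_pi hx0 (lt_of_le_of_lt hx.2 hr.2)).ne'
    apply ContinuousWithinAt.sub
    · exact (((Real.continuous_cos.continuousAt.div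
        Real.continuous_sin.continuousAt hsin).pow 2)).continuousWithinAt
    · exact (continuousAt_const.div (continuousAt_pow x 2) (pow_ne_zero 2 hx0.ne')).continuousWithinAt
  exact hint1.trans hint2

lemma K_continuousOn {r : ℝ} (hr : r ∈ Set.Ioo 0 π) :
    ContinuousOn K (Set.Icc 0 r) := by
  intro x hx
  rcases eq_or_lt_of_le hx.1 with h | h
  · rw [ContinuousWithinAt, ← h, K_zero]
    exact K_tendsto.mono_left (nhdsWithin_mono _ (fun y hy => hy.1))
  · have hsin : 0 < Real.sin x :=
      Real.sin_pos_of_pos_of_lt_pi h (lt_of_le_of_lt hx.2 hr.2)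
    exact (ContinuousAt.div (by fun_prop) (by fun_prop)
      (by positivity)).continuousWithinAt

lemma integral_G (a b : ℝ) {r : ℝ} (hr : r ∈ Set.Ioo 0 π) :
    ∫ s in (0:ℝ)..r, (b + a * W s) = b * r + a * (K r - r) := by
  have key : ∫ s in (0:ℝ)..r, (b + a * W s)
      = (fun s => b * s + a * (K s - s)) r - (fun s => b * s + a * (K s - s)) 0 := by
    apply intervalIntegral.integral_eq_sub_of_hasDeriv_right_of_le hr.1.le
    · exact (continuousOn_const.mul continuousOn_id).add
        (continuousOn_const.mul ((K_continuousOn hr).sub continuousOn_id))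
    · intro x hx
      have hx' : x ∈ Set.Ioo 0 π := ⟨hx.1, lt_trans hx.2 hr.2⟩
      have hx0 : x ≠ 0 := hx.1.ne'
      have hsin : Real.sin x ≠ 0 :=
        (Real.sin_pos_of_pos_of_lt_pi hx'.1 hx'.2).ne'
      have hinv : HasDerivAt (fun s : ℝ => 1/s) (-(1/x^2)) x := by
        simpa [one_div] using hasDerivAt_inv hx0
      have hK : HasDerivAt K (-(1/x^2) - (-1 - ct x ^ 2)) x := by
        apply HasDerivAt.congr_of_eventuallyEq (hinv.sub (hasDerivAt_ct hsin))
        filter_upwards [isOpen_Ioo.mem_nhds hx'] with s hs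
        exact K_eq hs.1.ne' (Real.sin_pos_of_pos_of_lt_pi hs.1 hs.2).ne'
      have hH : HasDerivAt (fun s => b * s + a * (K s - s)) (b + a * W x) x := by
        have := ((hasDerivAt_id x).const_mul b).add
          (((hK.sub (hasDerivAt_id x))).const_mul a)
        refine this.congr_deriv ?_
        unfold W; ring
      exact hH.hasDerivWithinAt
    · exact (intervalIntegrable_const).add ((W_intervalIntegrable hr).const_mul a)
  rw [key]
  simp [K_zero]

end ParametrixAux

/-- The first-order parametrix coefficient
`u₁(r) = (u₀(r)/r) ∫₀^r u₀⁻¹ (Δu₀)` equals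
`u₀(r)·(d−1)/(4r²)·[3 − d + (d−1)r² + (d−3)·r·cot r]`. -/
theorem parametrix_u1_formula (d : ℕ) (hd : 1 ≤ d) (r : ℝ) (hr : r ∈ Ioo (0:ℝ) π) :
    (u₀ d r / r) * ∫ s in (0:ℝ)..r, (u₀ d s)⁻¹ * radLap d (u₀ d) s
      = u₀ d r * ((d : ℝ) - 1) / (4 * r ^ 2) *
        (3 - (d : ℝ) + ((d : ℝ) - 1) * r ^ 2 +
          ((d : ℝ) - 3) * r * (Real.cos r / Real.sin r)) := by
  obtain ⟨hr0, hrπ⟩ := hr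
  have hsin : 0 < Real.sin r := Real.sin_pos_of_pos_of_lt_pi hr0 hrπ
  have hcongr : ∫ s in (0:ℝ)..r, (u₀ d s)⁻¹ * radLap d (u₀ d) s
      = ∫ s in (0:ℝ)..r, ((((d:ℝ)-1)/2)
          + (((d:ℝ)-1)/2) * (1 - ((d:ℝ)-1)/2) * ParametrixAux.W s) := by
    apply intervalIntegral.integral_congr_ae
    rw [Set.uIoc_of_le hr0.le]
    filter_upwards with x hx
    have hx' : x ∈ Set.Ioo 0 π := ⟨hx.1, lt_of_le_of_lt hx.2 hrπ⟩
    rw [ParametrixAux.integrand_eq d hx']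
    rfl
  rw [hcongr, ParametrixAux.integral_G _ _ ⟨hr0, hrπ⟩,
    ParametrixAux.K_eq hr0.ne' hsin.ne']
  unfold ParametrixAux.ct
  field_simp
  ring
end

section
/- For d = 2, the ratio u_1(r)/u_0(r) = (1/(4r²))·[1 + r² − r·cot r] is strictly increasing on (0, π) and tends to +∞ as r → π⁻. -/
open Real Set Filter
open Topology

lemma aux1 {s : ℝ} (h0 : 0 < s) (hπ : s < π) : 0 < Real.sin s - s * Real.cos s := by
  have hsin : 0 < Real.sin s := Real.sin_pos_of_pos_of_lt_pi h0 hπ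
  rcases lt_or_ge s (π / 2) with h | h
  · have hcos : 0 < Real.cos s := Real.cos_pos_of_mem_Ioo ⟨by linarith [Real.pi_pos], h⟩
    have ht : s < Real.tan s := Real.lt_tan h0 h
    have := Real.tan_eq_sin_div_cos s
    rw [this] at ht
    have : s * Real.cos s < Real.sin s := by
      rw [← lt_div_iff₀ hcos]; exact ht
    linarith
  · have hcos : Real.cos s ≤ 0 := Real.cos_nonpos_of_pi_div_two_le_of_le h (by linarith [Real.pi_pos])
    nlinarith

lemma aux2 {t : ℝ} (h0 : 0 < t) (ht : t < 2 * π) :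
    0 < 2 - 2 * Real.cos t - t * Real.sin t := by
  have h0' : 0 < t / 2 := by linarith
  have hπ' : t / 2 < π := by linarith
  have hsin : 0 < Real.sin (t / 2) := Real.sin_pos_of_pos_of_lt_pi h0' hπ'
  have h1 : Real.sin t = 2 * Real.sin (t / 2) * Real.cos (t / 2) := by
    have := Real.sin_two_mul (t / 2); rwa [show 2 * (t / 2) = t by ring] at this
  have h2 : Real.cos t = 2 * Real.cos (t / 2) ^ 2 - 1 := by
    have := Real.cos_two_mul (t / 2); rwa [show 2 * (t / 2) = t by ring] at this
  have h3 := Real.sin_sq_add_cos_sq (t / 2)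
  have h4 := aux1 h0' hπ'
  nlinarith [mul_pos hsin h4]

lemma aux3 {t : ℝ} (h0 : 0 < t) (ht : t < 2 * π) :
    0 < 2 * t - 3 * Real.sin t + t * Real.cos t := by
  have hmono : StrictMonoOn (fun t : ℝ => 2 * t - 3 * Real.sin t + t * Real.cos t)
      (Icc 0 (2 * π)) := by
    apply strictMonoOn_of_deriv_pos (convex_Icc _ _)
    · fun_prop
    · intro x hx
      rw [interior_Icc] at hx
      have hd : HasDerivAt (fun t : ℝ => 2 * t - 3 * Real.sin t + t * Real.cos t)
          (2 * 1 - 3 * Real.cos x + (1 * Real.cos x + x * (-Real.sin x))) x :=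
        (((hasDerivAt_id x).const_mul 2).sub ((Real.hasDerivAt_sin x).const_mul 3)).add
          ((hasDerivAt_id x).mul (Real.hasDerivAt_cos x))
      rw [hd.deriv]
      have := aux2 hx.1 hx.2
      nlinarith
  have := hmono (left_mem_Icc.2 (by positivity)) ⟨h0.le, ht.le⟩ h0
  simpa using this

lemma aux4 {t : ℝ} (h0 : 0 < t) (ht : t < 2 * π) :
    0 < t ^ 2 + t * Real.sin t + 4 * Real.cos t - 4 := by
  have hmono : StrictMonoOn (fun t : ℝ => t ^ 2 + t * Real.sin t + 4 * Real.cos t - 4)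
      (Icc 0 (2 * π)) := by
    apply strictMonoOn_of_deriv_pos (convex_Icc _ _)
    · fun_prop
    · intro x hx
      rw [interior_Icc] at hx
      have hd : HasDerivAt (fun t : ℝ => t ^ 2 + t * Real.sin t + 4 * Real.cos t - 4)
          ((2 : ℕ) * x ^ 1 + (1 * Real.sin x + x * Real.cos x) + 4 * (-Real.sin x) - 0) x :=
        (((hasDerivAt_pow 2 x).add ((hasDerivAt_id x).mul (Real.hasDerivAt_sin x))).add
          ((Real.hasDerivAt_cos x).const_mul 4)).sub (hasDerivAt_const x 4)
      rw [hd.deriv]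
      have := aux3 hx.1 hx.2
      push_cast
      nlinarith
  have := hmono (left_mem_Icc.2 (by positivity)) ⟨h0.le, ht.le⟩ h0
  simpa using this

lemma auxN {r : ℝ} (h0 : 0 < r) (hπ : r < π) :
    0 < r ^ 2 + r * Real.sin r * Real.cos r - 2 * Real.sin r ^ 2 := by
  have h := aux4 (t := 2 * r) (by linarith) (by linarith)
  have h1 : Real.sin (2 * r) = 2 * Real.sin r * Real.cos r := Real.sin_two_mul r
  have h2 : Real.cos (2 * r) = 2 * Real.cos r ^ 2 - 1 := Real.cos_two_mul r
  have h3 := Real.sin_sq_add_cos_sq r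
  nlinarith

/-- For `d = 2`, the ratio `u₁/u₀ = (1/(4r²))·[1 + r² − r·cot r]` is strictly
increasing on `(0, π)` and tends to `+∞` as `r → π⁻`. -/
theorem parametrix_ratio_d2_increasing_and_divergent :
    StrictMonoOn (fun r : ℝ => (1 / (4 * r ^ 2)) *
        (1 + r ^ 2 - r * (Real.cos r / Real.sin r))) (Ioo 0 π) ∧
    Tendsto (fun r : ℝ => (1 / (4 * r ^ 2)) *
        (1 + r ^ 2 - r * (Real.cos r / Real.sin r))) (nhdsWithin π (Iio π)) atTop := by
  constructor
  · apply strictMonoOn_of_deriv_pos (convex_Ioo _ _)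
    · apply ContinuousOn.mul
      · apply ContinuousOn.div continuousOn_const (by fun_prop)
        intro x hx; have : x ≠ 0 := ne_of_gt hx.1; positivity
      · apply ContinuousOn.sub (by fun_prop)
        apply ContinuousOn.mul continuousOn_id
        apply ContinuousOn.div (by fun_prop) (by fun_prop)
        intro x hx; exact (Real.sin_pos_of_pos_of_lt_pi hx.1 hx.2).ne'
    · intro r hr
      rw [interior_Ioo] at hr
      have hr0 : (0:ℝ) < r := hr.1
      have hsinpos : 0 < Real.sin r := Real.sin_pos_of_pos_of_lt_pi hr.1 hr.2
      have hsin : Real.sin r ≠ 0 := hsinpos.ne'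
      have hd1 : HasDerivAt (fun x : ℝ => Real.cos x / Real.sin x)
          ((-Real.sin r * Real.sin r - Real.cos r * Real.cos r) / Real.sin r ^ 2) r :=
        (Real.hasDerivAt_cos r).div (Real.hasDerivAt_sin r) hsin
      have hd2 := (hasDerivAt_id r).mul hd1
      have hd3 := ((hasDerivAt_const r (1:ℝ)).add (hasDerivAt_pow 2 r)).sub hd2
      have hd4 := (hasDerivAt_pow 2 r).const_mul (4:ℝ)
      have hd5 := (hasDerivAt_const r (1:ℝ)).div hd4 (by positivity)
      have hd6 : HasDerivAt (fun r : ℝ => (1 / (4 * r ^ 2)) *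
          (1 + r ^ 2 - r * (Real.cos r / Real.sin r)))
          ((0 * (4 * r ^ 2) - 1 * (4 * ((2:ℕ) * r ^ 1))) / (4 * r ^ 2) ^ 2 *
            (1 + r ^ 2 - r * (Real.cos r / Real.sin r)) +
          1 / (4 * r ^ 2) *
            (0 + (2:ℕ) * r ^ 1 -
              (1 * (Real.cos r / Real.sin r) +
                r * ((-Real.sin r * Real.sin r - Real.cos r * Real.cos r) / Real.sin r ^ 2)))) r :=
        hd5.mul hd3
      rw [hd6.deriv]
      have hN := auxN hr.1 hr.2
      have key : (0 * (4 * r ^ 2) - 1 * (4 * ((2:ℕ) * r ^ 1))) / (4 * r ^ 2) ^ 2 *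
            (1 + r ^ 2 - r * (Real.cos r / Real.sin r)) +
          1 / (4 * r ^ 2) *
            (0 + (2:ℕ) * r ^ 1 -
              (1 * (Real.cos r / Real.sin r) +
                r * ((-Real.sin r * Real.sin r - Real.cos r * Real.cos r) / Real.sin r ^ 2)))
          = (r ^ 2 + r * Real.sin r * Real.cos r - 2 * Real.sin r ^ 2) /
              (4 * r ^ 3 * Real.sin r ^ 2) := by
        have hr0' : r ≠ 0 := hr0.ne'
        field_simp
        linear_combination r ^ 2 * Real.sin_sq_add_cos_sq r
      rw [key]
      apply div_pos hN (by positivity)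
  · have hmem : Ioo (π / 2) π ∈ 𝓝[<] π :=
      Ioo_mem_nhdsLT_of_mem ⟨by linarith [Real.pi_pos], le_refl π⟩
    have h1 : Tendsto Real.sin (𝓝[<] π) (𝓝[>] 0) := by
      rw [tendsto_nhdsWithin_iff]
      constructor
      · have := (Real.continuous_sin.tendsto π).mono_left (nhdsWithin_le_nhds (s := Iio π))
        simpa [Real.sin_pi] using this
      · filter_upwards [hmem] with x hx
        exact Real.sin_pos_of_pos_of_lt_pi (by linarith [Real.pi_pos, hx.1]) hx.2
    have h2 : Tendsto (fun r : ℝ => (Real.sin r)⁻¹) (𝓝[<] π) atTop :=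
      tendsto_inv_nhdsGT_zero.comp h1
    have h3 : Tendsto (fun r : ℝ => -Real.cos r / (4 * r)) (𝓝[<] π) (𝓝 (1 / (4 * π))) := by
      have hc : ContinuousAt (fun r : ℝ => -Real.cos r / (4 * r)) π := by
        apply ContinuousAt.div (by fun_prop) (by fun_prop)
        have := Real.pi_pos; positivity
      have := hc.tendsto.mono_left (nhdsWithin_le_nhds (s := Iio π))
      simpa [Real.cos_pi] using this
    have h4 : Tendsto (fun r : ℝ => -Real.cos r / (4 * r) * (Real.sin r)⁻¹) (𝓝[<] π) atTop :=
      Filter.Tendsto.pos_mul_atTop (by positivity) h3 h2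
    have h5 : Tendsto (fun r : ℝ => 1 / (4 * r ^ 2) + 1 / 4) (𝓝[<] π)
        (𝓝 (1 / (4 * π ^ 2) + 1 / 4)) := by
      have hc : ContinuousAt (fun r : ℝ => 1 / (4 * r ^ 2) + 1 / 4) π := by
        apply ContinuousAt.add _ continuousAt_const
        apply ContinuousAt.div continuousAt_const (by fun_prop)
        have := Real.pi_pos; positivity
      exact hc.tendsto.mono_left (nhdsWithin_le_nhds (s := Iio π))
    have h6 := h5.add_atTop h4
    apply h6.congr'
    filter_upwards [hmem] with r hrm
    have hr0 : 0 < r := by linarith [Real.pi_pos, hrm.1]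
    have hsin : Real.sin r ≠ 0 := (Real.sin_pos_of_pos_of_lt_pi hr0 hrm.2).ne'
    have hr0' : r ≠ 0 := hr0.ne'
    field_simp
    ring
end
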